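/- arXiv:0907.1318 — 2 statements merged into one kernel-verified Lean document; each statement's English description precedes it below -/
import Mathlib

section
/- Let f : ℝ₊ → ℂ be measurable and suppose there exist constants K > 0 and α > 1/2 such that for every r > 0, the weighted L² bound ∫₀^∞ (r t e^{−r t})² |f(t)|² dt ≤ K²/(1 + log⁺ r)^{2α} holds. Then for every t₀ > 0, ∫₀^{t₀} |f(t)|² dt ≤ K'² for a constant K' depending only on K, α and t₀ (in particular f ∈ L²(0, t₀)). -/
open MeasureTheory Filter Asymptotics

/-- If f satisfies the weighted bounds ∫₀^∞ (r t e^{−rt})² |f t|² dt ≤ K²/(1+log⁺ r)^{2α}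
    for all r > 0 with α > 1/2, then f ∈ L²(0,t₀) for every t₀ > 0 with a bound depending
    only on K, α, t₀. -/
theorem stmt2 (f : ℝ → ℂ) (hf : Measurable f) (K α : ℝ) (hK : 0 < K) (hα : 1 / 2 < α)
    (h : ∀ r : ℝ, 0 < r →
      (∫⁻ t in Set.Ioi (0 : ℝ),
          ENNReal.ofReal ((r * t * Real.exp (-(r * t))) ^ 2 * ‖f t‖ ^ 2))
        ≤ ENNReal.ofReal (K ^ 2 / (1 + max (Real.log r) 0) ^ (2 * α))) :
    ∀ t₀ : ℝ, 0 < t₀ → ∃ K' : ℝ, 0 < K' ∧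
      (∫⁻ t in Set.Ioc (0 : ℝ) t₀, ENNReal.ofReal (‖f t‖ ^ 2))
        ≤ ENNReal.ofReal (K' ^ 2) := by
  intro t₀ ht₀
  classical
  set C : ℝ := Real.exp 4 * K ^ 2 with hCdef
  have hCpos : 0 < C := by positivity
  set a : ℕ → ℝ := fun n => C / (1 + max (Real.log (2 ^ (n + 1) / t₀)) 0) ^ (2 * α) with hadef
  have hbpos : ∀ n : ℕ, (0:ℝ) < (1 + max (Real.log (2 ^ (n + 1) / t₀)) 0) ^ (2 * α) := by
    intro n
    apply Real.rpow_pos_of_pos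
    have : (0:ℝ) ≤ max (Real.log (2 ^ (n + 1) / t₀)) 0 := le_max_right _ _
    linarith
  have hapos : ∀ n, 0 < a n := fun n => div_pos hCpos (hbpos n)
  -- key bound on each dyadic piece
  have key : ∀ n : ℕ,
      (∫⁻ t in Set.Ioc (t₀ / 2 ^ (n + 1)) (t₀ / 2 ^ n), ENNReal.ofReal (‖f t‖ ^ 2))
        ≤ ENNReal.ofReal (a n) := by
    intro n
    set r : ℝ := 2 ^ (n + 1) / t₀ with hrdef
    have hrpos : 0 < r := by positivity
    have step1 : (∫⁻ t in Set.Ioc (t₀ / 2 ^ (n + 1)) (t₀ / 2 ^ n), ENNReal.ofReal (‖f t‖ ^ 2))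
        ≤ ∫⁻ t in Set.Ioc (t₀ / 2 ^ (n + 1)) (t₀ / 2 ^ n),
            ENNReal.ofReal (Real.exp 4) *
              ENNReal.ofReal ((r * t * Real.exp (-(r * t))) ^ 2 * ‖f t‖ ^ 2) := by
      apply setLIntegral_mono' measurableSet_Ioc
      intro t ht
      obtain ⟨ht1, ht2⟩ := ht
      have htpos : 0 < t := lt_of_le_of_lt (by positivity) ht1
      have hrt1 : 1 ≤ r * t := by
        rw [hrdef, div_mul_eq_mul_div, le_div_iff₀ ht₀]
        have := (div_lt_iff₀ (by positivity : (0:ℝ) < 2 ^ (n + 1))).mp ht1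
        nlinarith
      have hrt2 : r * t ≤ 2 := by
        rw [hrdef, div_mul_eq_mul_div, div_le_iff₀ ht₀]
        have := (le_div_iff₀ (by positivity : (0:ℝ) < 2 ^ n)).mp ht2
        have h2 : (2:ℝ) ^ (n + 1) = 2 * 2 ^ n := by ring
        nlinarith
      have hx : Real.exp (-2) ≤ r * t * Real.exp (-(r * t)) := by
        have h2 : Real.exp (-(r * t)) ≥ Real.exp (-2) := Real.exp_le_exp.mpr (by linarith)
        calc Real.exp (-2) = 1 * Real.exp (-2) := (one_mul _).symm
          _ ≤ (r * t) * Real.exp (-(r * t)) :=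
            mul_le_mul hrt1 h2 (Real.exp_pos _).le (by linarith)
      have hsq : Real.exp (-2) ^ 2 ≤ (r * t * Real.exp (-(r * t))) ^ 2 :=
        pow_le_pow_left₀ (Real.exp_pos _).le hx 2
      have hexp4 : Real.exp (-2) ^ 2 = Real.exp (-4) := by
        rw [sq, ← Real.exp_add]; norm_num
      have hmul : Real.exp 4 * Real.exp (-4) = 1 := by
        rw [← Real.exp_add]; norm_num [Real.exp_zero]
      rw [← ENNReal.ofReal_mul (Real.exp_pos 4).le]
      apply ENNReal.ofReal_le_ofReal
      have hnn : (0:ℝ) ≤ ‖f t‖ ^ 2 := sq_nonneg _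
      calc ‖f t‖ ^ 2 = Real.exp 4 * (Real.exp (-4) * ‖f t‖ ^ 2) := by
            rw [← mul_assoc, hmul, one_mul]
        _ ≤ Real.exp 4 * ((r * t * Real.exp (-(r * t))) ^ 2 * ‖f t‖ ^ 2) := by
            apply mul_le_mul_of_nonneg_left _ (Real.exp_pos 4).le
            apply mul_le_mul_of_nonneg_right _ hnn
            rw [← hexp4]; exact hsq
    have step2 : (∫⁻ t in Set.Ioc (t₀ / 2 ^ (n + 1)) (t₀ / 2 ^ n),
            ENNReal.ofReal (Real.exp 4) *
              ENNReal.ofReal ((r * t * Real.exp (-(r * t))) ^ 2 * ‖f t‖ ^ 2))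
        ≤ ENNReal.ofReal (Real.exp 4) *
            ∫⁻ t in Set.Ioi (0:ℝ),
              ENNReal.ofReal ((r * t * Real.exp (-(r * t))) ^ 2 * ‖f t‖ ^ 2) := by
      rw [lintegral_const_mul' _ _ ENNReal.ofReal_ne_top]
      apply mul_le_mul_right (lintegral_mono_set ?_)
      intro t ht
      exact lt_of_le_of_lt (by positivity) ht.1
    calc (∫⁻ t in Set.Ioc (t₀ / 2 ^ (n + 1)) (t₀ / 2 ^ n), ENNReal.ofReal (‖f t‖ ^ 2))
        ≤ ENNReal.ofReal (Real.exp 4) *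
            ∫⁻ t in Set.Ioi (0:ℝ),
              ENNReal.ofReal ((r * t * Real.exp (-(r * t))) ^ 2 * ‖f t‖ ^ 2) :=
          step1.trans step2
      _ ≤ ENNReal.ofReal (Real.exp 4) *
            ENNReal.ofReal (K ^ 2 / (1 + max (Real.log r) 0) ^ (2 * α)) :=
          mul_le_mul_right (h r hrpos) _
      _ = ENNReal.ofReal (a n) := by
          rw [← ENNReal.ofReal_mul (Real.exp_pos 4).le]
          congr 1
          rw [hadef]
          simp only [hCdef, hrdef]
          rw [mul_div_assoc]
  -- summability of a
  have hlog2 : (1:ℝ) / 2 < Real.log 2 := by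
    have := Real.log_two_gt_d9
    linarith
  have hsum : Summable a := by
    have h2α : 1 < 2 * α := by linarith
    apply summable_of_isBigO_nat (Real.summable_nat_rpow_inv.mpr h2α)
    rw [Asymptotics.isBigO_iff]
    refine ⟨C * 2 ^ (2 * α), ?_⟩
    have hev1 : ∀ᶠ n : ℕ in atTop,
        Real.log t₀ - Real.log 2 ≤ (n : ℝ) * (Real.log 2 - 1 / 2) := by
      have ht : Tendsto (fun n : ℕ => (n : ℝ) * (Real.log 2 - 1 / 2)) atTop atTop :=
        tendsto_natCast_atTop_atTop.atTop_mul_const (by linarith)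
      exact ht.eventually_ge_atTop _
    filter_upwards [hev1, Filter.eventually_ge_atTop 1] with n hn hn1
    have hn1' : (1:ℝ) ≤ (n:ℝ) := by exact_mod_cast hn1
    have hlogr : Real.log (2 ^ (n + 1) / t₀) = (n + 1 : ℝ) * Real.log 2 - Real.log t₀ := by
      rw [Real.log_div (by positivity) (ne_of_gt ht₀), Real.log_pow]
      push_cast; ring
    have hlb : (n : ℝ) / 2 ≤ max (Real.log (2 ^ (n + 1) / t₀)) 0 := by
      refine le_trans ?_ (le_max_left _ _)
      rw [hlogr]; nlinarith
    have hlb' : (n : ℝ) / 2 ≤ 1 + max (Real.log (2 ^ (n + 1) / t₀)) 0 := by linarith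
    have hnpos : (0:ℝ) < (n : ℝ) / 2 := by linarith
    have hrpow : ((n : ℝ) / 2) ^ (2 * α) ≤ (1 + max (Real.log (2 ^ (n + 1) / t₀)) 0) ^ (2 * α) :=
      Real.rpow_le_rpow hnpos.le hlb' (by linarith)
    have hdiv : ((n : ℝ) / 2) ^ (2 * α) = (n : ℝ) ^ (2 * α) / 2 ^ (2 * α) :=
      Real.div_rpow (by positivity) (by norm_num : (0:ℝ) ≤ 2) (2 * α)
    have hrp : (0:ℝ) < ((n : ℝ) / 2) ^ (2 * α) := Real.rpow_pos_of_pos hnpos _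
    have hbound : a n ≤ C * 2 ^ (2 * α) * ((n : ℝ) ^ (2 * α))⁻¹ := by
      have h1 : a n ≤ C / (((n : ℝ) / 2) ^ (2 * α)) :=
        div_le_div_of_nonneg_left hCpos.le hrp hrpow
      refine h1.trans (le_of_eq ?_)
      rw [hdiv]
      field_simp
    rw [Real.norm_eq_abs, Real.norm_eq_abs, abs_of_pos (hapos n),
      abs_of_pos (by positivity : (0:ℝ) < ((n : ℝ) ^ (2 * α))⁻¹)]
    exact hbound
  -- covering
  have hsub : Set.Ioc (0:ℝ) t₀ ⊆ ⋃ n : ℕ, Set.Ioc (t₀ / 2 ^ (n + 1)) (t₀ / 2 ^ n) := by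
    intro t ht
    obtain ⟨htpos, htle⟩ := ht
    have hex : ∃ n : ℕ, t₀ / 2 ^ (n + 1) < t := by
      obtain ⟨m, hm⟩ := pow_unbounded_of_one_lt (t₀ / t) (one_lt_two (α := ℝ))
      refine ⟨m, ?_⟩
      have h1 : t₀ / 2 ^ m < t := by
        rw [div_lt_iff₀ (by positivity)]
        have := (div_lt_iff₀ htpos).mp hm
        linarith [this]
      have h2 : t₀ / 2 ^ (m + 1) ≤ t₀ / 2 ^ m := by
        apply div_le_div_of_nonneg_left ht₀.le (by positivity)
        exact pow_le_pow_right₀ one_le_two (Nat.le_succ m)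
      linarith
    set n := Nat.find hex with hndef
    refine Set.mem_iUnion.mpr ⟨n, Nat.find_spec hex, ?_⟩
    rcases Nat.eq_zero_or_pos n with hn0 | hnpos
    · rw [hn0]; simpa using htle
    · obtain ⟨m, hm⟩ := Nat.exists_eq_succ_of_ne_zero hnpos.ne'
      have := Nat.find_min hex (by omega : m < n)
      rw [hm]
      push_neg at this
      exact this
  -- assemble
  have hS : 0 ≤ ∑' n, a n := tsum_nonneg fun n => (hapos n).le
  refine ⟨Real.sqrt (∑' n, a n + 1), Real.sqrt_pos.mpr (by linarith), ?_⟩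
  have hsq : Real.sqrt (∑' n, a n + 1) ^ 2 = ∑' n, a n + 1 := Real.sq_sqrt (by linarith)
  calc (∫⁻ t in Set.Ioc (0:ℝ) t₀, ENNReal.ofReal (‖f t‖ ^ 2))
      ≤ ∫⁻ t in ⋃ n : ℕ, Set.Ioc (t₀ / 2 ^ (n + 1)) (t₀ / 2 ^ n),
          ENNReal.ofReal (‖f t‖ ^ 2) := lintegral_mono_set hsub
    _ ≤ ∑' n : ℕ, ∫⁻ t in Set.Ioc (t₀ / 2 ^ (n + 1)) (t₀ / 2 ^ n),
          ENNReal.ofReal (‖f t‖ ^ 2) := lintegral_iUnion_le _ _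
    _ ≤ ∑' n : ℕ, ENNReal.ofReal (a n) := ENNReal.tsum_le_tsum key
    _ = ENNReal.ofReal (∑' n, a n) :=
        (ENNReal.ofReal_tsum_of_nonneg (fun n => (hapos n).le) hsum).symm
    _ ≤ ENNReal.ofReal (Real.sqrt (∑' n, a n + 1) ^ 2) := by
        rw [hsq]; exact ENNReal.ofReal_le_ofReal (by linarith)
end

section
/- Let ω > 0 and 0 < 2α < β ≤ 1, and set â(λ) = λ^{−α}/(ω + λ^{β−α}) on the open right half-plane. Then â is 1-regular: there exists K > 0 such that |λ â'(λ)| ≤ K |â(λ)| for all Re λ > 0. -/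
open Complex Real

/-- The kernel transform â(λ) = λ^{−α}/(ω + λ^{β−α}) is 1-regular:
    |λ â'(λ)| ≤ K |â(λ)| on the open right half-plane. -/
theorem stmt7 (ω α β : ℝ) (hω : 0 < ω) (hα : 0 < α) (hαβ : 2 * α < β) (hβ : β ≤ 1) :
    ∃ K : ℝ, 0 < K ∧ ∀ z : ℂ, 0 < z.re →
      ‖(z * deriv (fun w : ℂ =>
          w ^ (-(α : ℂ)) / ((ω : ℂ) + w ^ (((β - α : ℝ) : ℂ)))) z)‖
        ≤ K * ‖(z ^ (-(α : ℂ)) / ((ω : ℂ) + z ^ (((β - α : ℝ) : ℂ))))‖ := by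
  set γ : ℝ := β - α with hγdef
  have hγ0 : 0 < γ := by simp only [hγdef]; nlinarith
  have hγ1 : γ < 1 := by simp only [hγdef]; nlinarith
  have hπ := Real.pi_pos
  have hcos : 0 < Real.cos (γ * (π / 2)) := by
    apply Real.cos_pos_of_mem_Ioo
    constructor <;> nlinarith
  refine ⟨α + γ / Real.cos (γ * (π / 2)), by positivity, ?_⟩
  intro z hz
  have hz0 : z ≠ 0 := by intro h; simp [h] at hz
  set c : ℂ := ((γ : ℝ) : ℂ) with hc
  -- lower bound on Re (z ^ c)
  have harg : |Complex.arg z| < π / 2 :=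
    Complex.abs_arg_lt_pi_div_two_iff.2 (Or.inl hz)
  have hrecos : Real.cos (γ * (π / 2)) ≤ Real.cos (Complex.arg z * γ) := by
    have h1 : |Complex.arg z * γ| ≤ γ * (π / 2) := by
      rw [abs_mul, abs_of_pos hγ0]
      nlinarith [abs_nonneg (Complex.arg z), harg.le]
    calc Real.cos (γ * (π / 2)) ≤ Real.cos |Complex.arg z * γ| :=
          Real.cos_le_cos_of_nonneg_of_le_pi (abs_nonneg _) (by nlinarith) h1
      _ = Real.cos (Complex.arg z * γ) := Real.cos_abs _
  have habs : ‖z ^ c‖ = ‖z‖ ^ γ := Complex.norm_cpow_real z γ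
  have hre : (z ^ c).re = ‖z‖ ^ γ * Real.cos (Complex.arg z * γ) := by
    rw [Complex.cpow_def_of_ne_zero hz0, Complex.exp_re]
    have h1 : (Complex.log z * c).re = Real.log (‖z‖) * γ := by
      simp [hc, Complex.log_re]
    have h2 : (Complex.log z * c).im = Complex.arg z * γ := by
      simp [hc, Complex.log_im]
    rw [h1, h2, Real.rpow_def_of_pos ((norm_pos_iff.mpr hz0))]
  have hkey : ‖z ^ c‖ * Real.cos (γ * (π / 2)) ≤ (z ^ c).re := by
    rw [hre, habs]
    have : (0:ℝ) ≤ ‖z‖ ^ γ := Real.rpow_nonneg (norm_nonneg z) γ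
    nlinarith
  have hrepos : 0 < ((ω : ℂ) + z ^ c).re := by
    have h0 : 0 ≤ ‖z ^ c‖ * Real.cos (γ * (π / 2)) := by positivity
    simp only [Complex.add_re, Complex.ofReal_re]
    nlinarith
  have hden : ((ω : ℂ) + z ^ c) ≠ 0 := by
    intro h; rw [h] at hrepos; simp at hrepos
  have hdenabs : ‖z ^ c‖ * Real.cos (γ * (π / 2)) ≤
      ‖(ω : ℂ) + z ^ c‖ := by
    have h3 := Complex.re_le_norm ((ω : ℂ) + z ^ c)
    simp only [Complex.add_re, Complex.ofReal_re] at h3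
    linarith
  -- compute the derivative
  have hslit : z ∈ Complex.slitPlane := Or.inl hz
  have hA : HasDerivAt (fun w : ℂ => w ^ (-(α : ℂ)))
      (-(α : ℂ) * z ^ (-(α : ℂ) - 1) * 1) z :=
    (hasDerivAt_id z).cpow_const hslit
  have hB : HasDerivAt (fun w : ℂ => (ω : ℂ) + w ^ c)
      (0 + c * z ^ (c - 1) * 1) z :=
    (hasDerivAt_const z ((ω : ℂ))).add ((hasDerivAt_id z).cpow_const hslit)
  have hf : HasDerivAt (fun w : ℂ => w ^ (-(α : ℂ)) / ((ω : ℂ) + w ^ c))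
      ((-(α : ℂ) * z ^ (-(α : ℂ) - 1) * 1 * ((ω : ℂ) + z ^ c)
        - z ^ (-(α : ℂ)) * (0 + c * z ^ (c - 1) * 1)) / ((ω : ℂ) + z ^ c) ^ 2) z :=
    hA.div hB hden
  rw [hf.deriv]
  -- identity : z * deriv = (-(α) - c * z^c/(ω+z^c)) * f
  have hzsub1 : z ^ (-(α : ℂ) - 1) = z ^ (-(α : ℂ)) / z := by
    rw [Complex.cpow_sub _ _ hz0, Complex.cpow_one]
  have hzsub2 : z ^ (c - 1) = z ^ c / z := by
    rw [Complex.cpow_sub _ _ hz0, Complex.cpow_one]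
  have hid : z * ((-(α : ℂ) * z ^ (-(α : ℂ) - 1) * 1 * ((ω : ℂ) + z ^ c)
        - z ^ (-(α : ℂ)) * (0 + c * z ^ (c - 1) * 1)) / ((ω : ℂ) + z ^ c) ^ 2)
      = (-(α : ℂ) - c * (z ^ c / ((ω : ℂ) + z ^ c)))
        * (z ^ (-(α : ℂ)) / ((ω : ℂ) + z ^ c)) := by
    rw [hzsub1, hzsub2]
    field_simp
    ring
  rw [hid, norm_mul]
  -- bound the first factor
  have hq : ‖z ^ c / ((ω : ℂ) + z ^ c)‖ ≤ 1 / Real.cos (γ * (π / 2)) := by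
    rw [norm_div, div_le_div_iff₀ ((norm_pos_iff.mpr hden)) hcos]
    linarith [hdenabs]
  have hfac : ‖-(α : ℂ) - c * (z ^ c / ((ω : ℂ) + z ^ c))‖
      ≤ α + γ / Real.cos (γ * (π / 2)) := by
    calc ‖-(α : ℂ) - c * (z ^ c / ((ω : ℂ) + z ^ c))‖
        ≤ ‖-(α : ℂ)‖ + ‖c * (z ^ c / ((ω : ℂ) + z ^ c))‖ := by
          simpa [sub_eq_add_neg] using
            norm_add_le (-(α : ℂ)) (-(c * (z ^ c / ((ω : ℂ) + z ^ c))))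
      _ ≤ α + γ / Real.cos (γ * (π / 2)) := by
          rw [norm_neg, norm_mul]
          have h1 : ‖(α : ℂ)‖ = α := by
            rw [Complex.norm_real, Real.norm_of_nonneg hα.le]
          have h2 : ‖c‖ = γ := by
            rw [hc, Complex.norm_real, Real.norm_of_nonneg hγ0.le]
          rw [h1, h2, div_eq_mul_one_div γ]
          have := mul_le_mul_of_nonneg_left hq hγ0.le
          linarith
  exact mul_le_mul_of_nonneg_right hfac (norm_nonneg _) |>.trans_eq rfl
    |>.trans (le_of_eq rfl)
end
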